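/- Let θ : ĝ → g be a central extension of restricted Lie algebras over F with kernel h (so [h,ĝ] = 0 and u^[2]_ĝ = 0 for all u ∈ h), let D_g be a restricted derivation of (g,[2]_g), let D_h : h → h be F-linear, and let s : g → ĝ be a section of θ. Define ψ(x,y) = [s(x),s(y)] + s([x,y]) and ς(x) = s(x)^[2]_ĝ + s(x^[2]_g) (both valued in h), and set Ob_I(x,y) = D_h(ψ(x,y)) + ψ(D_g(x),y) + ψ(x,D_g(y)) and Ob_II(x) = D_h(ς(x)) + ψ(x,D_g(x)). Then (Ob_I, Ob_II) is a 2-cocycle of the restricted Lie algebra (g,[2]_g) with values in the trivial module h: Ob_I is alternating F-bilinear, Ob_II(a·x) = a²·Ob_II(x), Ob_II(x+y) = Ob_II(x) + Ob_II(y) + Ob_I(x,y), and for all x,y,z ∈ g, Ob_I(x,[y,z]) + Ob_I(y,[z,x]) + Ob_I(z,[x,y]) = 0 and Ob_I(x^[2]_g, y) + Ob_I([x,y], x) = 0. -/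

import Mathlib

/-- for a central extension `θ : ĝ → g` of restricted Lie algebras with
kernel `h` (embedded in `ĝ`), a restricted derivation `D_g` of `g` and a linear map
`D_h` on the kernel, the obstruction cochain `(Ob_I, Ob_II)` built from a section `s` is
a 2-cocycle of `(g,[2])` with values in the trivial module `h`.  The operator `D_h` is
modelled as a linear endomorphism `Dh` of `ĝ` preserving the kernel. -/
theorem stmt15
    {F : Type*} [Field F] [CharP F 2]
    {g : Type*} [LieRing g] [LieAlgebra F g]
    {gh : Type*} [LieRing gh] [LieAlgebra F gh]
    -- restricted structure on g
    (sqg : g → g)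
    (hsqg_ad : ∀ x y : g, ⁅sqg x, y⁆ = ⁅x, ⁅x, y⁆⁆)
    (hsqg_smul : ∀ (a : F) (x : g), sqg (a • x) = a ^ 2 • sqg x)
    (hsqg_add : ∀ x y : g, sqg (x + y) = sqg x + sqg y + ⁅x, y⁆)
    -- restricted structure on ĝ
    (sqgh : gh → gh)
    (hsqgh_ad : ∀ u v : gh, ⁅sqgh u, v⁆ = ⁅u, ⁅u, v⁆⁆)
    (hsqgh_smul : ∀ (a : F) (u : gh), sqgh (a • u) = a ^ 2 • sqgh u)
    (hsqgh_add : ∀ u v : gh, sqgh (u + v) = sqgh u + sqgh v + ⁅u, v⁆)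
    -- θ : ĝ → g is a central extension of restricted Lie algebras with kernel h
    (θ : gh →ₗ⁅F⁆ g)
    (hθsurj : Function.Surjective θ)
    (hθsq : ∀ u : gh, θ (sqgh u) = sqg (θ u))
    (hcentral : ∀ u : gh, θ u = 0 → ∀ v : gh, ⁅u, v⁆ = 0)
    (hker_sq : ∀ u : gh, θ u = 0 → sqgh u = 0)
    -- a restricted derivation of g
    (Dg : g →ₗ[F] g)
    (hDg_br : ∀ x y : g, Dg ⁅x, y⁆ = ⁅Dg x, y⁆ + ⁅x, Dg y⁆)
    (hDg_sq : ∀ x : g, Dg (sqg x) = ⁅x, Dg x⁆)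
    -- a linear map D_h : h → h on the kernel
    (Dh : gh →ₗ[F] gh)
    (hDh_ker : ∀ u : gh, θ u = 0 → θ (Dh u) = 0)
    -- a section of θ
    (s : g →ₗ[F] gh)
    (hs : ∀ x : g, θ (s x) = x) :
    let ψ : g → g → gh := fun x y => ⁅s x, s y⁆ + s ⁅x, y⁆
    let ς : g → gh := fun x => sqgh (s x) + s (sqg x)
    let ObI : g → g → gh := fun x y => Dh (ψ x y) + ψ (Dg x) y + ψ x (Dg y)
    let ObII : g → gh := fun x => Dh (ς x) + ψ x (Dg x)
    -- (Ob_I, Ob_II) takes values in the kernel h: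
    ((∀ x y : g, θ (ObI x y) = 0) ∧ (∀ x : g, θ (ObII x) = 0)) ∧
    -- Ob_I is alternating F-bilinear:
    ((∀ (a : F) (x x' y : g), ObI (a • x + x') y = a • ObI x y + ObI x' y) ∧
     (∀ (a : F) (x y y' : g), ObI x (a • y + y') = a • ObI x y + ObI x y') ∧
     (∀ x : g, ObI x x = 0)) ∧
    -- Ob_II satisfies the 2-cochain conditions:
    ((∀ (a : F) (x : g), ObII (a • x) = a ^ 2 • ObII x) ∧
     (∀ x y : g, ObII (x + y) = ObII x + ObII y + ObI x y)) ∧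
    -- and the 2-cocycle equations with trivial coefficients hold:
    ((∀ x y z : g, ObI x ⁅y, z⁆ + ObI y ⁅z, x⁆ + ObI z ⁅x, y⁆ = 0) ∧
     (∀ x y : g, ObI (sqg x) y + ObI ⁅x, y⁆ x = 0)) := by
  intro ψ ς ObI ObII
  -- definitional equations, then make the local definitions opaque
  have hψ_def : ∀ x y : g, ψ x y = ⁅s x, s y⁆ + s ⁅x, y⁆ := fun _ _ => rfl
  have hς_def : ∀ x : g, ς x = sqgh (s x) + s (sqg x) := fun _ => rfl
  have hObI_def : ∀ x y : g, ObI x y = Dh (ψ x y) + ψ (Dg x) y + ψ x (Dg y) :=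
    fun _ _ => rfl
  have hObII_def : ∀ x : g, ObII x = Dh (ς x) + ψ x (Dg x) := fun _ => rfl
  clear_value ψ ς ObI ObII
  -- characteristic-two facts
  have h2F : (2 : F) = 0 := by exact_mod_cast CharP.cast_eq_zero F 2
  have h2g : ∀ z : g, z + z = 0 := fun z => by rw [← two_smul F z, h2F, zero_smul]
  have h2gh : ∀ z : gh, z + z = 0 := fun z => by rw [← two_smul F z, h2F, zero_smul]
  have hneg_g : ∀ z : g, -z = z := fun z => neg_eq_of_add_eq_zero_left (h2g z)
  have hneg_gh : ∀ z : gh, -z = z := fun z => neg_eq_of_add_eq_zero_left (h2gh z)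
  have hswap : ∀ a b : gh, a + b + a = b := fun a b => by
    have h : a + b + a = a + a + b := by abel
    rw [h, h2gh, zero_add]
  have hskew_g : ∀ a b : g, ⁅a, b⁆ = ⁅b, a⁆ := fun a b => by rw [← lie_skew, hneg_g]
  have hskew_gh : ∀ a b : gh, ⁅a, b⁆ = ⁅b, a⁆ := fun a b => by rw [← lie_skew, hneg_gh]
  -- ψ and ς take values in the kernel
  have hψker : ∀ x y : g, θ (ψ x y) = 0 := fun x y => by
    rw [hψ_def, map_add θ, LieHom.map_lie]
    simp only [hs]
    exact h2g _
  have hςker : ∀ x : g, θ (ς x) = 0 := fun x => by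
    rw [hς_def, map_add θ, hθsq]
    simp only [hs]
    exact h2g _
  -- kernel elements are central
  have hcenψ1 : ∀ (x y : g) (v : gh), ⁅ψ x y, v⁆ = 0 := fun x y v =>
    hcentral _ (hψker x y) v
  have hcenψ2 : ∀ (x y : g) (v : gh), ⁅v, ψ x y⁆ = 0 := fun x y v => by
    rw [hskew_gh, hcenψ1]
  have hcenς1 : ∀ (x : g) (v : gh), ⁅ς x, v⁆ = 0 := fun x v =>
    hcentral _ (hςker x) v
  -- expressing s of a bracket / square
  have hs_br : ∀ y z : g, s ⁅y, z⁆ = ψ y z + ⁅s y, s z⁆ := fun y z => by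
    rw [hψ_def]
    exact (hswap ⁅s y, s z⁆ (s ⁅y, z⁆)).symm
  have hs_sq : ∀ x : g, s (sqg x) = ς x + sqgh (s x) := fun x => by
    rw [hς_def]
    exact (hswap (sqgh (s x)) (s (sqg x))).symm
  -- symmetry and bilinearity of ψ
  have hψ_symm : ∀ x y : g, ψ x y = ψ y x := fun x y => by
    rw [hψ_def, hψ_def, hskew_gh (s x) (s y), hskew_g x y]
  have hψ_diag : ∀ x : g, ψ x x = 0 := fun x => by
    rw [hψ_def, lie_self, lie_self, map_zero, add_zero]
  have hψ_addl : ∀ x x' y : g, ψ (x + x') y = ψ x y + ψ x' y := fun x x' y => by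
    simp only [hψ_def, add_lie, map_add]; abel
  have hψ_addr : ∀ x y y' : g, ψ x (y + y') = ψ x y + ψ x y' := fun x y y' => by
    simp only [hψ_def, lie_add, map_add]; abel
  have hψ_smull : ∀ (a : F) (x y : g), ψ (a • x) y = a • ψ x y := fun a x y => by
    simp only [hψ_def, smul_lie, map_smul, smul_add]
  have hψ_smulr : ∀ (a : F) (x y : g), ψ x (a • y) = a • ψ x y := fun a x y => by
    simp only [hψ_def, lie_smul, map_smul, smul_add]
  have hψ_l : ∀ (a : F) (x x' y : g), ψ (a • x + x') y = a • ψ x y + ψ x' y :=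
    fun a x x' y => by rw [hψ_addl, hψ_smull]
  have hψ_r : ∀ (a : F) (x y y' : g), ψ x (a • y + y') = a • ψ x y + ψ x y' :=
    fun a x y y' => by rw [hψ_addr, hψ_smulr]
  -- the two fundamental identities for ψ
  have hJ : ∀ x y z : g, ψ x ⁅y, z⁆ + ψ y ⁅z, x⁆ + ψ z ⁅x, y⁆ = 0 := by
    intro x y z
    rw [hψ_def x ⁅y, z⁆, hψ_def y ⁅z, x⁆, hψ_def z ⁅x, y⁆,
      hs_br y z, hs_br z x, hs_br x y, lie_add, lie_add, lie_add,
      hcenψ2 y z (s x), hcenψ2 z x (s y), hcenψ2 x y (s z),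
      zero_add, zero_add, zero_add]
    have jb : ⁅s x, ⁅s y, s z⁆⁆ + ⁅s y, ⁅s z, s x⁆⁆ + ⁅s z, ⁅s x, s y⁆⁆ = 0 :=
      lie_jacobi (s x) (s y) (s z)
    have js : s ⁅x, ⁅y, z⁆⁆ + s ⁅y, ⁅z, x⁆⁆ + s ⁅z, ⁅x, y⁆⁆ = 0 := by
      rw [← map_add, ← map_add, lie_jacobi, map_zero]
    calc ⁅s x, ⁅s y, s z⁆⁆ + s ⁅x, ⁅y, z⁆⁆ + (⁅s y, ⁅s z, s x⁆⁆ + s ⁅y, ⁅z, x⁆⁆)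
          + (⁅s z, ⁅s x, s y⁆⁆ + s ⁅z, ⁅x, y⁆⁆)
        = (⁅s x, ⁅s y, s z⁆⁆ + ⁅s y, ⁅s z, s x⁆⁆ + ⁅s z, ⁅s x, s y⁆⁆)
          + (s ⁅x, ⁅y, z⁆⁆ + s ⁅y, ⁅z, x⁆⁆ + s ⁅z, ⁅x, y⁆⁆) := by abel
      _ = 0 := by rw [jb, js, add_zero]
  have hK : ∀ x y : g, ψ (sqg x) y + ψ ⁅x, y⁆ x = 0 := by
    intro x y
    rw [hψ_def (sqg x) y, hψ_def ⁅x, y⁆ x, hs_sq x, hs_br x y,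
      add_lie, add_lie, hcenς1 x (s y), hcenψ1 x y (s x),
      zero_add, zero_add, hsqgh_ad, hsqg_ad,
      hskew_gh ⁅s x, s y⁆ (s x), hskew_g ⁅x, y⁆ x]
    exact h2gh _
  have hT : ∀ a b c : g, ψ ⁅a, b⁆ c + ψ ⁅b, c⁆ a + ψ ⁅c, a⁆ b = 0 := by
    intro a b c
    rw [hψ_symm ⁅a, b⁆ c, hψ_symm ⁅b, c⁆ a, hψ_symm ⁅c, a⁆ b, add_rotate]
    exact hJ a b c
  -- facts about ς
  have hς_add : ∀ x y : g, ς (x + y) = ς x + ς y + ψ x y := fun x y => by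
    rw [hς_def, map_add, hsqgh_add, hsqg_add, map_add, map_add, hς_def, hς_def, hψ_def]
    abel
  have hς_smul : ∀ (a : F) (x : g), ς (a • x) = a ^ 2 • ς x := fun a x => by
    rw [hς_def, map_smul, hsqgh_smul, hsqg_smul, map_smul, hς_def, smul_add]
  refine ⟨⟨?_, ?_⟩, ⟨?_, ?_, ?_⟩, ⟨?_, ?_⟩, ⟨?_, ?_⟩⟩
  · -- ObI takes values in the kernel
    intro x y
    rw [hObI_def, map_add θ, map_add θ,
      hDh_ker _ (hψker x y), hψker, hψker, add_zero, add_zero]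
  · -- ObII takes values in the kernel
    intro x
    rw [hObII_def, map_add θ, hDh_ker _ (hςker x), hψker, add_zero]
  · -- left linearity of ObI
    intro a x x' y
    simp only [hObI_def, map_add, map_smul, hψ_l, smul_add]
    abel
  · -- right linearity of ObI
    intro a x y y'
    simp only [hObI_def, map_add, map_smul, hψ_r, smul_add]
    abel
  · -- ObI is alternating
    intro x
    rw [hObI_def, hψ_diag, map_zero, zero_add, hψ_symm x (Dg x)]
    exact h2gh _
  · -- ObII is quadratic
    intro a x
    simp only [hObII_def, hς_smul, map_smul, hψ_smull, hψ_smulr, smul_smul,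
      pow_two, smul_add]
  · -- ObII is a quadratic refinement of ObI
    intro x y
    simp only [hObII_def, hObI_def, hς_add, map_add, hψ_addl, hψ_addr]
    rw [hψ_symm y (Dg x)]
    abel
  · -- first cocycle identity
    intro x y z
    have key : ObI x ⁅y, z⁆ + ObI y ⁅z, x⁆ + ObI z ⁅x, y⁆
        = Dh (ψ x ⁅y, z⁆ + ψ y ⁅z, x⁆ + ψ z ⁅x, y⁆)
          + (ψ (Dg x) ⁅y, z⁆ + ψ y ⁅z, Dg x⁆ + ψ z ⁅Dg x, y⁆)
          + (ψ (Dg y) ⁅z, x⁆ + ψ z ⁅x, Dg y⁆ + ψ x ⁅Dg y, z⁆)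
          + (ψ (Dg z) ⁅x, y⁆ + ψ x ⁅y, Dg z⁆ + ψ y ⁅Dg z, x⁆) := by
      simp only [hObI_def, hDg_br, hψ_addr, map_add]
      abel
    rw [key, hJ x y z, hJ (Dg x) y z, hJ (Dg y) z x, hJ (Dg z) x y, map_zero]
    simp
  · -- second cocycle identity
    intro x y
    have g3 : ψ ⁅x, Dg x⁆ y + ψ ⁅Dg x, y⁆ x + ψ ⁅x, y⁆ (Dg x) = 0 := by
      have h := hT x (Dg x) y
      rwa [hskew_g y x] at h
    have key : ObI (sqg x) y + ObI ⁅x, y⁆ x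
        = Dh (ψ (sqg x) y + ψ ⁅x, y⁆ x)
          + (ψ (sqg x) (Dg y) + ψ ⁅x, Dg y⁆ x)
          + (ψ ⁅x, Dg x⁆ y + ψ ⁅Dg x, y⁆ x + ψ ⁅x, y⁆ (Dg x)) := by
      simp only [hObI_def, hDg_sq, hDg_br, hψ_addl, map_add]
      abel
    rw [key, hK x y, hK x (Dg y), g3, map_zero]
    simp
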